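/- Assume the RNdS parameters (Λ, M, Q) (with Λ > 0, M > 0) are non-degenerate, with horizon radii r₋ < r₊ and photon sphere radius r_P (the unique critical point of ψ(r) := μ(r)/r² in (r₋, r₊)). Set a := μ(r_P)⁻² r_P² ψ″(r_P) and b := −2μ(r_P). Then a < 0 and b < 0, and the 2×2 real matrix [[0, a], [b, 0]] has exactly two eigenvalues, namely √(ab) > 0 and −√(ab) < 0. In particular, the minimal and maximal expansion rates of the linearized flow in the directions normal to the trapped set coincide. -/

import Mathlib

/-- The Reissner–Nordström–de Sitter metric coefficient
`μ(r) = 1 − 2M/r − Λr²/3 + Q²/r²`. -/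
noncomputable def mu (Λ M Q r : ℝ) : ℝ := 1 - 2 * M / r - Λ * r ^ 2 / 3 + Q ^ 2 / r ^ 2

/-- `ψ(r) = μ(r)/r²`. -/
noncomputable def psi (Λ M Q r : ℝ) : ℝ := mu Λ M Q r / r ^ 2

/-- Non-degeneracy of the RNdS parameters `(Λ, M, Q)`, witnessed by the horizon radii
`0 < rm < rp`. -/
def NondegAt (Λ M Q rm rp : ℝ) : Prop :=
  0 < rm ∧ rm < rp ∧
  mu Λ M Q rm = 0 ∧ mu Λ M Q rp = 0 ∧
  deriv (mu Λ M Q) rm ≠ 0 ∧ deriv (mu Λ M Q) rp ≠ 0 ∧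
  (∀ r : ℝ, (rm < r ∧ r < rp) ∨ rp < r → mu Λ M Q r ≠ 0) ∧
  ∃ rP ∈ Set.Ioo rm rp,
    deriv (psi Λ M Q) rP = 0 ∧
    deriv (deriv (psi Λ M Q)) rP ≠ 0 ∧
    ∀ r ∈ Set.Ioo rm rp, deriv (psi Λ M Q) r = 0 → r = rP

lemma deriv_nonpos_right_aux (f : ℝ → ℝ) {x y : ℝ} (hxy : x < y)
    (hf : DifferentiableAt ℝ f x) (h0 : f x = 0)
    (hneg : ∀ z ∈ Set.Ioo x y, f z ≤ 0) : deriv f x ≤ 0 := by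
  have h1 : HasDerivWithinAt f (deriv f x) (Set.Ioi x) x :=
    hf.hasDerivAt.hasDerivWithinAt
  rw [hasDerivWithinAt_iff_tendsto_slope] at h1
  have hs : Set.Ioi x \ {x} = Set.Ioi x := by
    simp [Set.diff_singleton_eq_self]
  rw [hs] at h1
  refine le_of_tendsto h1 ?_
  filter_upwards [Ioo_mem_nhdsGT_of_mem ⟨le_refl x, hxy⟩] with z hz
  rw [slope_def_field]
  have := hneg z hz
  have hzx : x < z := hz.1
  exact div_nonpos_of_nonpos_of_nonneg (by simp [h0, this]) (by linarith)

lemma deriv_nonneg_left_aux (f : ℝ → ℝ) {w x : ℝ} (hxy : w < x)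
    (hf : DifferentiableAt ℝ f x) (h0 : f x = 0)
    (hneg : ∀ z ∈ Set.Ioo w x, f z ≤ 0) : 0 ≤ deriv f x := by
  have h1 : HasDerivWithinAt f (deriv f x) (Set.Iio x) x :=
    hf.hasDerivAt.hasDerivWithinAt
  rw [hasDerivWithinAt_iff_tendsto_slope] at h1
  have hs : Set.Iio x \ {x} = Set.Iio x := by
    simp [Set.diff_singleton_eq_self]
  rw [hs] at h1
  refine ge_of_tendsto h1 ?_
  filter_upwards [Ioo_mem_nhdsLT_of_mem ⟨hxy, le_refl x⟩] with z hz
  rw [slope_def_field]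
  have hfz := hneg z hz
  have hzx : z < x := hz.2
  rw [div_nonneg_iff]
  exact Or.inr ⟨by simp [h0, hfz], by linarith⟩

/-- At the photon sphere radius `rP` of a non-degenerate RNdS black hole, set
`a = μ(rP)⁻² rP² ψ″(rP)` and `b = −2μ(rP)`. Then `a < 0`, `b < 0`, and the linearization
`[[0, a], [b, 0]]` of the flow normal to the trapped set has exactly the two eigenvalues
`√(ab) > 0` and `−√(ab) < 0`; in particular minimal and maximal expansion rates coincide. -/
theorem trapped_set_linearization_eigenvalues (Λ M Q rm rp rP a b : ℝ)
    (hΛ : 0 < Λ) (hM : 0 < M)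
    (h : NondegAt Λ M Q rm rp)
    (hrP : rP ∈ Set.Ioo rm rp) (hcrit : deriv (psi Λ M Q) rP = 0)
    (ha : a = (mu Λ M Q rP ^ 2)⁻¹ * rP ^ 2 * deriv (deriv (psi Λ M Q)) rP)
    (hb : b = -2 * mu Λ M Q rP) :
    a < 0 ∧ b < 0 ∧ 0 < Real.sqrt (a * b) ∧ -Real.sqrt (a * b) < 0 ∧
    spectrum ℝ (!![0, a; b, 0] : Matrix (Fin 2) (Fin 2) ℝ) =
      {Real.sqrt (a * b), -Real.sqrt (a * b)} := by
  obtain ⟨hrm0, hrmrp, hmum, hmup, hdm, hdp, hnz, rP', hrP'mem, hcrit', hsecond', huniq⟩ := h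
  have hrPeq : rP = rP' := huniq rP hrP hcrit
  have hsecond : deriv (deriv (psi Λ M Q)) rP ≠ 0 := by rw [hrPeq]; exact hsecond'
  have hrp0 : (0 : ℝ) < rp := lt_trans hrm0 hrmrp
  have hrP0 : (0 : ℝ) < rP := lt_trans hrm0 hrP.1
  -- smoothness
  have hne : ∀ x : ℝ, x ∈ Set.Ioi (0:ℝ) → x ≠ 0 := fun x hx => ne_of_gt hx
  have hne2 : ∀ x : ℝ, x ∈ Set.Ioi (0:ℝ) → x ^ 2 ≠ 0 := fun x hx => pow_ne_zero 2 (hne x hx)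
  have hsq : ContDiffOn ℝ ⊤ (fun r : ℝ => r ^ 2) (Set.Ioi 0) := contDiffOn_id.pow 2
  have hsm_mu : ContDiffOn ℝ ⊤ (mu Λ M Q) (Set.Ioi 0) := by
    have h1 : ContDiffOn ℝ ⊤ (fun r : ℝ => 2 * M / r) (Set.Ioi 0) :=
      ContDiffOn.div contDiffOn_const contDiffOn_id hne
    have h2 : ContDiffOn ℝ ⊤ (fun r : ℝ => Λ * r ^ 2 / 3) (Set.Ioi 0) :=
      (contDiffOn_const.mul hsq).div_const 3
    have h3 : ContDiffOn ℝ ⊤ (fun r : ℝ => Q ^ 2 / r ^ 2) (Set.Ioi 0) :=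
      ContDiffOn.div contDiffOn_const hsq hne2
    exact ((contDiffOn_const.sub h1).sub h2).add h3
  have hsm : ContDiffOn ℝ ⊤ (psi Λ M Q) (Set.Ioi 0) :=
    ContDiffOn.div hsm_mu hsq hne2
  have hmu_cont : ContinuousOn (mu Λ M Q) (Set.Ioi 0) := hsm_mu.continuousOn
  have hmu_diff : ∀ x : ℝ, 0 < x → DifferentiableAt ℝ (mu Λ M Q) x := fun x hx =>
    ((hsm_mu.differentiableOn (by simp)).differentiableAt (isOpen_Ioi.mem_nhds hx))
  -- a point R beyond rp where μ < 0
  set R : ℝ := max (rp + 1) (Real.sqrt (3 * (1 + Q ^ 2) / Λ) + 1) with hRdef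
  have hRrp : rp < R := lt_of_lt_of_le (by linarith) (le_max_left _ _)
  have hR1 : (1 : ℝ) ≤ R :=
    le_trans (by nlinarith [Real.sqrt_nonneg (3 * (1 + Q ^ 2) / Λ)]) (le_max_right _ _)
  have hR0 : (0 : ℝ) < R := by linarith
  have hRsq : 3 * (1 + Q ^ 2) / Λ < R ^ 2 := by
    have h1 : Real.sqrt (3 * (1 + Q ^ 2) / Λ) + 1 ≤ R := le_max_right _ _
    have h2 : Real.sqrt (3 * (1 + Q ^ 2) / Λ) ^ 2 = 3 * (1 + Q ^ 2) / Λ :=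
      Real.sq_sqrt (by positivity)
    nlinarith [Real.sqrt_nonneg (3 * (1 + Q ^ 2) / Λ)]
  have hmuR : mu Λ M Q R < 0 := by
    unfold mu
    have h1 : Q ^ 2 / R ^ 2 ≤ Q ^ 2 := by
      rw [div_le_iff₀ (by positivity)]
      nlinarith [mul_nonneg (sq_nonneg Q) (show (0:ℝ) ≤ R ^ 2 - 1 by nlinarith)]
    have h2 : 1 + Q ^ 2 < Λ * R ^ 2 / 3 := by
      rw [div_lt_iff₀ hΛ] at hRsq; nlinarith
    have h3 : 0 < 2 * M / R := by positivity
    linarith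
  -- μ < 0 on (rp, R)
  have hmu_neg_right : ∀ x ∈ Set.Ioo rp R, mu Λ M Q x < 0 := by
    intro x hx
    rcases (hnz x (Or.inr hx.1)).lt_or_gt with hlt | hgt
    · exact hlt
    · exfalso
      have hsub : Set.Icc x R ⊆ Set.Ioi 0 := fun z hz => lt_of_lt_of_le (by linarith [hx.1]) hz.1
      have : (0 : ℝ) ∈ Set.Ioo (mu Λ M Q R) (mu Λ M Q x) := ⟨hmuR, hgt⟩
      obtain ⟨c, hc, hc0⟩ := intermediate_value_Ioo' hx.2.le (hmu_cont.mono hsub) this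
      exact hnz c (Or.inr (lt_trans hx.1 hc.1)) hc0
  -- μ'(rp) < 0
  have hdp_neg : deriv (mu Λ M Q) rp < 0 := by
    refine lt_of_le_of_ne ?_ hdp
    exact deriv_nonpos_right_aux _ hRrp (hmu_diff rp hrp0) hmup
      (fun z hz => (hmu_neg_right z hz).le)
  -- μ > 0 on (rm, rp)
  have hmu_pos : ∀ z ∈ Set.Ioo rm rp, 0 < mu Λ M Q z := by
    intro z hz
    rcases (hnz z (Or.inl ⟨hz.1, hz.2⟩)).lt_or_gt with hlt | hgt
    · exfalso
      have hz0 : (0 : ℝ) < z := lt_trans hrm0 hz.1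
      have hle : ∀ w ∈ Set.Ioo z rp, mu Λ M Q w ≤ 0 := by
        intro w hw
        rcases (hnz w (Or.inl ⟨lt_trans hz.1 hw.1, hw.2⟩)).lt_or_gt with h1 | h1
        · exact h1.le
        · exfalso
          have hsub : Set.Icc z w ⊆ Set.Ioi 0 := fun u hu => lt_of_lt_of_le hz0 hu.1
          have : (0 : ℝ) ∈ Set.Ioo (mu Λ M Q z) (mu Λ M Q w) := ⟨hlt, h1⟩
          obtain ⟨c, hc, hc0⟩ := intermediate_value_Ioo hw.1.le (hmu_cont.mono hsub) this
          exact hnz c (Or.inl ⟨lt_trans hz.1 hc.1, lt_trans hc.2 hw.2⟩) hc0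
      have := deriv_nonneg_left_aux _ hz.2 (hmu_diff rp hrp0) hmup hle
      linarith
    · exact hgt
  have hmuP : 0 < mu Λ M Q rP := hmu_pos rP hrP
  have hpsiP : 0 < psi Λ M Q rP := div_pos hmuP (by positivity)
  have hpsirp : psi Λ M Q rp = 0 := by unfold psi; rw [hmup]; simp
  -- derivative of ψ
  have hder_sm : ContDiffOn ℝ ⊤ (deriv (psi Λ M Q)) (Set.Ioi 0) :=
    hsm.deriv_of_isOpen isOpen_Ioi le_top
  have hder_cont : ContinuousOn (deriv (psi Λ M Q)) (Set.Ioi 0) := hder_sm.continuousOn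
  have hder_diff : DifferentiableAt ℝ (deriv (psi Λ M Q)) rP :=
    (hder_sm.differentiableOn (by simp)).differentiableAt (isOpen_Ioi.mem_nhds hrP0)
  -- MVT sample point in (rP, rp) with negative derivative of ψ
  have hsubP : Set.Icc rP rp ⊆ Set.Ioi 0 := fun u hu => lt_of_lt_of_le hrP0 hu.1
  obtain ⟨c, hc, hcval⟩ := exists_deriv_eq_slope (psi Λ M Q) hrP.2
    (hsm.continuousOn.mono hsubP)
    ((hsm.differentiableOn (by simp)).mono (fun u hu => lt_of_lt_of_le hrP0 hu.1.le))
  have hcneg : deriv (psi Λ M Q) c < 0 := by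
    rw [hcval, hpsirp]
    apply div_neg_of_neg_of_pos <;> [linarith; linarith [hrP.2]]
  -- ψ' < 0 on (rP, rp)
  have hpsider_neg : ∀ z ∈ Set.Ioo rP rp, deriv (psi Λ M Q) z < 0 := by
    intro z hz
    have hzmem : z ∈ Set.Ioo rm rp := ⟨lt_trans hrP.1 hz.1, hz.2⟩
    have hzne : deriv (psi Λ M Q) z ≠ 0 := by
      intro h0
      have := huniq z hzmem h0
      rw [← hrPeq] at this
      exact absurd this (ne_of_gt hz.1)
    rcases hzne.lt_or_gt with h1 | h1
    · exact h1
    · exfalso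
      rcases lt_or_gt_of_ne (show z ≠ c from fun he => by rw [he] at h1; linarith) with hzc | hzc
      · have hsub : Set.Icc z c ⊆ Set.Ioi 0 := fun u hu =>
          lt_of_lt_of_le (lt_trans hrP0 hz.1) hu.1
        have : (0 : ℝ) ∈ Set.Ioo (deriv (psi Λ M Q) c) (deriv (psi Λ M Q) z) := ⟨hcneg, h1⟩
        obtain ⟨d, hd, hd0⟩ := intermediate_value_Ioo' hzc.le (hder_cont.mono hsub) this
        have hdmem : d ∈ Set.Ioo rm rp :=
          ⟨lt_trans hzmem.1 hd.1, lt_trans hd.2 hc.2⟩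
        have := huniq d hdmem hd0
        rw [← hrPeq] at this
        exact absurd this (ne_of_gt (lt_trans hz.1 hd.1))
      · have hsub : Set.Icc c z ⊆ Set.Ioi 0 := fun u hu =>
          lt_of_lt_of_le (lt_trans hrP0 hc.1) hu.1
        have : (0 : ℝ) ∈ Set.Ioo (deriv (psi Λ M Q) c) (deriv (psi Λ M Q) z) := ⟨hcneg, h1⟩
        obtain ⟨d, hd, hd0⟩ := intermediate_value_Ioo hzc.le (hder_cont.mono hsub) this
        have hdmem : d ∈ Set.Ioo rm rp :=
          ⟨lt_trans hrP.1 (lt_trans hc.1 hd.1), lt_trans hd.2 hz.2⟩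
        have := huniq d hdmem hd0
        rw [← hrPeq] at this
        exact absurd this (ne_of_gt (lt_trans hc.1 hd.1))
  -- ψ''(rP) < 0
  have hsec_neg : deriv (deriv (psi Λ M Q)) rP < 0 := by
    refine lt_of_le_of_ne ?_ hsecond
    exact deriv_nonpos_right_aux _ hrP.2 hder_diff hcrit
      (fun z hz => (hpsider_neg z hz).le)
  -- conclusions about a and b
  have haneg : a < 0 := by
    rw [ha]
    apply mul_neg_of_pos_of_neg _ hsec_neg
    have : mu Λ M Q rP ≠ 0 := ne_of_gt hmuP
    positivity
  have hbneg : b < 0 := by rw [hb]; linarith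
  have hab : 0 < a * b := mul_pos_of_neg_of_neg haneg hbneg
  have hsqrt : 0 < Real.sqrt (a * b) := Real.sqrt_pos.mpr hab
  refine ⟨haneg, hbneg, hsqrt, by linarith, ?_⟩
  ext x
  have hdet : (algebraMap ℝ (Matrix (Fin 2) (Fin 2) ℝ) x - !![0, a; b, 0]).det
      = x ^ 2 - a * b := by
    have heq : (algebraMap ℝ (Matrix (Fin 2) (Fin 2) ℝ) x - !![0, a; b, 0])
        = !![x, -a; -b, x] := by
      ext i j
      fin_cases i <;> fin_cases j <;>
        simp [Algebra.algebraMap_eq_smul_one, Matrix.one_apply, Matrix.sub_apply]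
    rw [heq, Matrix.det_fin_two_of]; ring
  have hmem : x ∈ spectrum ℝ (!![0, a; b, 0] : Matrix (Fin 2) (Fin 2) ℝ) ↔ x ^ 2 = a * b := by
    rw [spectrum.mem_iff, Matrix.isUnit_iff_isUnit_det, isUnit_iff_ne_zero, not_ne_iff, hdet,
      sub_eq_zero]
  rw [Set.mem_insert_iff, Set.mem_singleton_iff, hmem]
  constructor
  · intro hx
    exact sq_eq_sq_iff_eq_or_eq_neg.mp (by rw [hx, Real.sq_sqrt hab.le])
  · rintro (rfl | rfl) <;> simp [Real.sq_sqrt hab.le, neg_pow]
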